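/- If P is the integral polytope defined by the ordering constraints 0 ≤ ũ_{G,t} ≤ ⋯ ≤ ũ_{1,t} ≤ 1, then the extended polytope Q obtained by adding nonnegative variables p̃_{g,t}, r̃⁺_{g,t}, r̃⁻_{g,t} with p̃_{g,t} + r̃⁺_{g,t} ≤ (P̄−P_)ũ_{g,t} and p̃_{g,t} ≥ r̃⁻_{g,t}, together with the defining equalities u_t = Σ_g ũ_{g,t}, p_t = Σ_g p̃_{g,t}, r⁺_t = Σ_g r̃⁺_{g,t}, r⁻_t = Σ_g r̃⁻_{g,t}, has all vertices with integral ũ-components; i.e., Q is the convex hull of its mixed-integer feasible points. -/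

import Mathlib

/-- The extended polytope (11)–(19): ordered commitment variables in `[0,1]`, nonnegative
production/reserve variables with capacity constraints affine in `ũ`, and aggregate
defining equalities. Points are tuples `(ũ, p̃, r̃⁺, r̃⁻, u, p, r⁺, r⁻)`. -/
def extendedPolytope (G T : ℕ) (Pmax Pmin : ℝ) :
    Set ((Fin G → Fin T → ℝ) × (Fin G → Fin T → ℝ) × (Fin G → Fin T → ℝ) ×
      (Fin G → Fin T → ℝ) × (Fin T → ℝ) × (Fin T → ℝ) × (Fin T → ℝ) × (Fin T → ℝ)) :=
  {x | (∀ g t, x.1 g t ∈ Set.Icc (0 : ℝ) 1) ∧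
    (∀ (g : Fin G) (t : Fin T) (h : (g : ℕ) + 1 < G), x.1 ⟨(g : ℕ) + 1, h⟩ t ≤ x.1 g t) ∧
    (∀ g t, 0 ≤ x.2.1 g t ∧ 0 ≤ x.2.2.1 g t ∧ 0 ≤ x.2.2.2.1 g t) ∧
    (∀ g t, x.2.1 g t + x.2.2.1 g t ≤ (Pmax - Pmin) * x.1 g t) ∧
    (∀ g t, x.2.2.2.1 g t ≤ x.2.1 g t) ∧
    (∀ t, x.2.2.2.2.1 t = ∑ g, x.1 g t) ∧
    (∀ t, x.2.2.2.2.2.1 t = ∑ g, x.2.1 g t) ∧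
    (∀ t, x.2.2.2.2.2.2.1 t = ∑ g, x.2.2.1 g t) ∧
    (∀ t, x.2.2.2.2.2.2.2 t = ∑ g, x.2.2.2.1 g t)}

lemma ep_convex (G T : ℕ) (Pmax Pmin : ℝ) : Convex ℝ (extendedPolytope G T Pmax Pmin) := by
  intro x hx y hy a b ha hb hab
  obtain ⟨h1, h2, h3, h4, h5, h6, h7, h8, h9⟩ := hx
  obtain ⟨k1, k2, k3, k4, k5, k6, k7, k8, k9⟩ := hy
  simp only [extendedPolytope, Set.mem_setOf_eq, Prod.fst_add, Prod.snd_add, Prod.smul_fst,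
    Prod.smul_snd, Pi.add_apply, Pi.smul_apply, smul_eq_mul, Set.mem_Icc]
  refine ⟨fun g t => ⟨?_, ?_⟩, fun g t h => ?_, fun g t => ⟨?_, ?_, ?_⟩, fun g t => ?_,
    fun g t => ?_, fun t => ?_, fun t => ?_, fun t => ?_, fun t => ?_⟩
  · nlinarith [(h1 g t).1, (k1 g t).1]
  · nlinarith [(h1 g t).2, (k1 g t).2]
  · nlinarith [h2 g t h, k2 g t h]
  · nlinarith [(h3 g t).1, (k3 g t).1]
  · nlinarith [(h3 g t).2.1, (k3 g t).2.1]
  · nlinarith [(h3 g t).2.2, (k3 g t).2.2]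
  · nlinarith [h4 g t, k4 g t]
  · nlinarith [h5 g t, k5 g t]
  · rw [h6 t, k6 t, Finset.mul_sum, Finset.mul_sum, ← Finset.sum_add_distrib]
  · rw [h7 t, k7 t, Finset.mul_sum, Finset.mul_sum, ← Finset.sum_add_distrib]
  · rw [h8 t, k8 t, Finset.mul_sum, Finset.mul_sum, ← Finset.sum_add_distrib]
  · rw [h9 t, k9 t, Finset.mul_sum, Finset.mul_sum, ← Finset.sum_add_distrib]

lemma ep_closed (G T : ℕ) (Pmax Pmin : ℝ) : IsClosed (extendedPolytope G T Pmax Pmin) := by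
  have c1 : ∀ (g : Fin G) (t : Fin T), Continuous fun x :
      ((Fin G → Fin T → ℝ) × (Fin G → Fin T → ℝ) × (Fin G → Fin T → ℝ) ×
      (Fin G → Fin T → ℝ) × (Fin T → ℝ) × (Fin T → ℝ) × (Fin T → ℝ) × (Fin T → ℝ)) =>
      x.1 g t := by intro g t; fun_prop
  have c2 : ∀ (g : Fin G) (t : Fin T), Continuous fun x :
      ((Fin G → Fin T → ℝ) × (Fin G → Fin T → ℝ) × (Fin G → Fin T → ℝ) ×
      (Fin G → Fin T → ℝ) × (Fin T → ℝ) × (Fin T → ℝ) × (Fin T → ℝ) × (Fin T → ℝ)) =>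
      x.2.1 g t := by intro g t; fun_prop
  unfold extendedPolytope
  simp only [Set.setOf_and, Set.setOf_forall]
  refine IsClosed.inter (isClosed_iInter fun g => isClosed_iInter fun t => ?_)
    (IsClosed.inter (isClosed_iInter fun g => isClosed_iInter fun t =>
        isClosed_iInter fun h => isClosed_le (by fun_prop) (by fun_prop))
    (IsClosed.inter (isClosed_iInter fun g => isClosed_iInter fun t => ?_)
    (IsClosed.inter (isClosed_iInter fun g => isClosed_iInter fun t =>
        isClosed_le (by fun_prop) (by fun_prop))
    (IsClosed.inter (isClosed_iInter fun g => isClosed_iInter fun t =>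
        isClosed_le (by fun_prop) (by fun_prop))
    (IsClosed.inter (isClosed_iInter fun t => isClosed_eq (by fun_prop)
        (continuous_finset_sum _ fun g _ => by fun_prop))
    (IsClosed.inter (isClosed_iInter fun t => isClosed_eq (by fun_prop)
        (continuous_finset_sum _ fun g _ => by fun_prop))
    (IsClosed.inter (isClosed_iInter fun t => isClosed_eq (by fun_prop)
        (continuous_finset_sum _ fun g _ => by fun_prop))
    (isClosed_iInter fun t => isClosed_eq (by fun_prop)
        (continuous_finset_sum _ fun g _ => by fun_prop)))))))))
  · exact IsClosed.preimage (c1 g t) isClosed_Icc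
  · exact IsClosed.inter (isClosed_le continuous_const (by fun_prop))
      (IsClosed.inter (isClosed_le continuous_const (by fun_prop))
        (isClosed_le continuous_const (by fun_prop)))

lemma ep_bounded (G T : ℕ) (Pmax Pmin : ℝ) (hP : Pmin < Pmax) :
    Bornology.IsBounded (extendedPolytope G T Pmax Pmin) := by
  set C := Pmax - Pmin with hCdef
  have hC : 0 < C := sub_pos.2 hP
  set R : ℝ := 1 + C + G * (1 + C) with hRdef
  have hR : (0:ℝ) ≤ R := by positivity
  apply Bornology.IsBounded.subset (Metric.isBounded_closedBall (x := 0) (r := R))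
  intro x hx
  obtain ⟨h1, h2, h3, h4, h5, h6, h7, h8, h9⟩ := hx
  have hu : ∀ g t, |x.1 g t| ≤ 1 := fun g t =>
    abs_le.2 ⟨by linarith [(h1 g t).1], (h1 g t).2⟩
  have hp : ∀ g t, |x.2.1 g t| ≤ C := by
    intro g t
    have := h4 g t
    have h01 := (h1 g t)
    have := (h3 g t).1
    have := (h3 g t).2.1
    rw [abs_le]
    constructor
    · linarith
    · nlinarith [h01.2, hC.le]
  have hr1 : ∀ g t, |x.2.2.1 g t| ≤ C := by
    intro g t
    have := h4 g t
    have h01 := (h1 g t)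
    have := (h3 g t).1
    have := (h3 g t).2.1
    rw [abs_le]
    constructor
    · linarith
    · nlinarith [h01.2, hC.le]
  have hr2 : ∀ g t, |x.2.2.2.1 g t| ≤ C := by
    intro g t
    have := h5 g t
    have := (h3 g t).2.2
    have habs := hp g t
    rw [abs_le] at habs ⊢
    constructor
    · linarith
    · linarith [habs.2]
  have key : ∀ (B : ℝ) (f : Fin G → Fin T → ℝ) (agg : Fin T → ℝ), 0 ≤ B →
      (∀ g t, |f g t| ≤ B) → (∀ t, agg t = ∑ g, f g t) → ∀ t, |agg t| ≤ G * B := by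
    intro B f agg hB hf hagg t
    rw [hagg t]
    calc |∑ g, f g t| ≤ ∑ g, |f g t| := Finset.abs_sum_le_sum_abs _ _
      _ ≤ ∑ _g : Fin G, B := Finset.sum_le_sum fun g _ => hf g t
      _ = G * B := by rw [Finset.sum_const]; simp [nsmul_eq_mul]
  have hub : ∀ t, |x.2.2.2.2.1 t| ≤ G * 1 := key 1 _ _ zero_le_one hu h6
  have hpb : ∀ t, |x.2.2.2.2.2.1 t| ≤ G * C := key C _ _ hC.le hp h7
  have hr1b : ∀ t, |x.2.2.2.2.2.2.1 t| ≤ G * C := key C _ _ hC.le hr1 h8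
  have hr2b : ∀ t, |x.2.2.2.2.2.2.2 t| ≤ G * C := key C _ _ hC.le hr2 h9
  have hGR : (G : ℝ) * C ≤ R ∧ (G:ℝ) * 1 ≤ R ∧ (1:ℝ) ≤ R ∧ C ≤ R := by
    refine ⟨?_, ?_, ?_, ?_⟩ <;> nlinarith [Nat.cast_nonneg (α := ℝ) G, hC.le]
  simp only [Metric.mem_closedBall, dist_zero_right, Prod.norm_def, max_le_iff]
  refine ⟨?_, ?_, ?_, ?_, ?_, ?_, ?_, ?_⟩ <;>
    [skip; skip; skip; skip; skip; skip; skip; skip]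
  · rw [pi_norm_le_iff_of_nonneg hR]
    intro g
    rw [pi_norm_le_iff_of_nonneg hR]
    intro t
    rw [Real.norm_eq_abs]
    exact (hu g t).trans hGR.2.2.1
  · rw [pi_norm_le_iff_of_nonneg hR]
    intro g
    rw [pi_norm_le_iff_of_nonneg hR]
    intro t
    rw [Real.norm_eq_abs]
    exact (hp g t).trans hGR.2.2.2
  · rw [pi_norm_le_iff_of_nonneg hR]
    intro g
    rw [pi_norm_le_iff_of_nonneg hR]
    intro t
    rw [Real.norm_eq_abs]
    exact (hr1 g t).trans hGR.2.2.2
  · rw [pi_norm_le_iff_of_nonneg hR]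
    intro g
    rw [pi_norm_le_iff_of_nonneg hR]
    intro t
    rw [Real.norm_eq_abs]
    exact (hr2 g t).trans hGR.2.2.2
  · rw [pi_norm_le_iff_of_nonneg hR]
    intro t
    rw [Real.norm_eq_abs]
    exact (hub t).trans hGR.2.1
  · rw [pi_norm_le_iff_of_nonneg hR]
    intro t
    rw [Real.norm_eq_abs]
    exact (hpb t).trans hGR.1
  · rw [pi_norm_le_iff_of_nonneg hR]
    intro t
    rw [Real.norm_eq_abs]
    exact (hr1b t).trans hGR.1
  · rw [pi_norm_le_iff_of_nonneg hR]
    intro t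
    rw [Real.norm_eq_abs]
    exact (hr2b t).trans hGR.1

lemma myIsCompact_convexHull {E : Type*} [NormedAddCommGroup E] [NormedSpace ℝ E]
    [FiniteDimensional ℝ E] {s : Set E} (hs : IsCompact s) : IsCompact (convexHull ℝ s) := by
  rcases s.eq_empty_or_nonempty with rfl | ⟨x0, hx0⟩
  · simpa using isCompact_empty
  set d := Module.finrank ℝ E + 1 with hd
  set f : (Fin d → ℝ) × (Fin d → E) → E := fun p => ∑ i, p.1 i • p.2 i with hf
  have hcont : Continuous f := by
    apply continuous_finset_sum
    intro i _
    exact ((continuous_apply i).comp continuous_fst).smul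
      ((continuous_apply i).comp continuous_snd)
  have hK : IsCompact ((stdSimplex ℝ (Fin d)) ×ˢ (Set.univ.pi fun _ : Fin d => s)) :=
    IsCompact.prod (isCompact_stdSimplex ℝ (Fin d)) (isCompact_univ_pi fun _ => hs)
  have himg : f '' ((stdSimplex ℝ (Fin d)) ×ˢ (Set.univ.pi fun _ : Fin d => s))
      = convexHull ℝ s := by
    apply Set.Subset.antisymm
    · rintro _ ⟨⟨w, z⟩, ⟨hw, hz⟩, rfl⟩
      exact (convex_convexHull ℝ s).sum_mem (fun i _ => hw.1 i) hw.2
        (fun i _ => subset_convexHull ℝ s (hz i (Set.mem_univ i)))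
    · intro x hx
      obtain ⟨ι, hι, z, w, hzs, hai, hwpos, hwsum, hwx⟩ :=
        eq_pos_convex_span_of_mem_convexHull hx
      haveI : Nonempty ι := by
        by_contra h
        rw [not_nonempty_iff] at h
        simp [Finset.univ_eq_empty] at hwsum
      have hcard : Fintype.card ι ≤ d := by
        calc Fintype.card ι ≤ Module.finrank ℝ (vectorSpan ℝ (Set.range z)) + 1 :=
              hai.card_le_finrank_succ
          _ ≤ d := by
              have := Submodule.finrank_le (vectorSpan ℝ (Set.range z))
              omega
      set σ : ι ↪ Fin d :=
        (Fintype.equivFin ι).toEmbedding.trans (Fin.castLEEmb hcard) with hσ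
      classical
      set W : Fin d → ℝ := fun j => ∑ i, if σ i = j then w i else 0 with hW
      set Z : Fin d → E := fun j =>
        if h : ∃ i, σ i = j then z h.choose else z (Classical.arbitrary ι) with hZdef
      have hZσ : ∀ i, Z (σ i) = z i := by
        intro i
        have h : ∃ i', σ i' = σ i := ⟨i, rfl⟩
        simp only [hZdef, dif_pos h]
        exact congrArg z (σ.injective h.choose_spec)
      refine ⟨(W, Z), ⟨⟨fun j => Finset.sum_nonneg fun i _ => ?_, ?_⟩, fun j _ => ?_⟩, ?_⟩
      · split <;> [exact (hwpos i).le; exact le_rfl]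
      · rw [Finset.sum_comm]
        simpa [Finset.sum_ite_eq] using hwsum
      · simp only [hZdef]
        split
        · exact hzs ⟨_, rfl⟩
        · exact hzs ⟨_, rfl⟩
      · show ∑ j, W j • Z j = x
        have : ∀ j, W j • Z j = ∑ i, if σ i = j then w i • Z j else 0 := by
          intro j
          rw [hW]
          rw [Finset.sum_smul]
          exact Finset.sum_congr rfl fun i _ => by split <;> simp
        simp_rw [this]
        rw [Finset.sum_comm]
        simp only [Finset.sum_ite_eq, Finset.mem_univ, if_true]
        rw [← hwx]
        exact Finset.sum_congr rfl fun i _ => by rw [hZσ]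
  rw [← himg]
  exact hK.image hcont

set_option maxHeartbeats 2000000 in
lemma ep_extreme_int (G T : ℕ) (Pmax Pmin : ℝ) :
    ∀ x ∈ Set.extremePoints ℝ (extendedPolytope G T Pmax Pmin),
      ∀ g t, x.1 g t = 0 ∨ x.1 g t = 1 := by
  classical
  intro x hx g t
  by_contra hcon
  push_neg at hcon
  obtain ⟨hne0, hne1⟩ := hcon
  obtain ⟨hxP, hxe⟩ := hx
  obtain ⟨c1, c2, c3, c4, c5, c6, c7, c8, c9⟩ := hxP
  set α := x.1 g t with hαdef
  have hα0 : 0 < α := lt_of_le_of_ne (c1 g t).1 (Ne.symm hne0)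
  have hα1 : α < 1 := lt_of_le_of_ne (c1 g t).2 hne1
  set F : Fin G → ℝ :=
    fun g' => if x.1 g' t = α then min α (1 - α) else |x.1 g' t - α| with hF
  set δ := Finset.univ.inf' (Finset.univ_nonempty_iff.mpr ⟨g⟩) F with hδdef
  have hδpos : 0 < δ := by
    rw [hδdef, Finset.lt_inf'_iff]
    intro g' _
    rw [hF]
    dsimp only
    split
    · exact lt_min hα0 (by linarith)
    · next h => exact abs_pos.2 (sub_ne_zero.2 h)
  have hδle : ∀ g', x.1 g' t ≠ α → δ ≤ |x.1 g' t - α| := by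
    intro g' h
    have h2 := Finset.inf'_le F (Finset.mem_univ g')
    rw [hF] at h2
    rw [hδdef]
    simp only [if_neg h] at h2
    exact h2
  have hδmin : δ ≤ min α (1 - α) := by
    have h2 := Finset.inf'_le F (Finset.mem_univ g)
    rw [hF] at h2
    rw [hδdef]
    simp only [if_pos hαdef.symm] at h2
    exact h2
  have hδα : δ ≤ α := hδmin.trans (min_le_left _ _)
  have hδ1α : δ ≤ 1 - α := hδmin.trans (min_le_right _ _)
  set ε := min 1 (δ / α) with hεdef
  have hε0 : 0 < ε := lt_min one_pos (div_pos hδpos hα0)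
  have hε1 : ε ≤ 1 := min_le_left _ _
  have hεδ : ε * α ≤ δ := by
    have := min_le_right 1 (δ / α)
    calc ε * α ≤ (δ / α) * α := by nlinarith
      _ = δ := by field_simp
  set d : (Fin G → Fin T → ℝ) × (Fin G → Fin T → ℝ) × (Fin G → Fin T → ℝ) ×
      (Fin G → Fin T → ℝ) × (Fin T → ℝ) × (Fin T → ℝ) × (Fin T → ℝ) × (Fin T → ℝ) :=
    ((fun g' t' => if t' = t ∧ x.1 g' t = α then α else 0),
     (fun g' t' => if t' = t ∧ x.1 g' t = α then x.2.1 g' t' else 0),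
     (fun g' t' => if t' = t ∧ x.1 g' t = α then x.2.2.1 g' t' else 0),
     (fun g' t' => if t' = t ∧ x.1 g' t = α then x.2.2.2.1 g' t' else 0),
     (fun t' => ∑ g', if t' = t ∧ x.1 g' t = α then α else 0),
     (fun t' => ∑ g', if t' = t ∧ x.1 g' t = α then x.2.1 g' t' else 0),
     (fun t' => ∑ g', if t' = t ∧ x.1 g' t = α then x.2.2.1 g' t' else 0),
     (fun t' => ∑ g', if t' = t ∧ x.1 g' t = α then x.2.2.2.1 g' t' else 0)) with hd
  have hmem : ∀ s : ℝ, |s| ≤ 1 → |s| * α ≤ δ →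
      x + s • d ∈ extendedPolytope G T Pmax Pmin := by
    intro s hs1 hs2
    have hs1' : -1 ≤ s := (abs_le.1 hs1).1
    have hs1'' : s ≤ 1 := (abs_le.1 hs1).2
    have hsα : s * α ≤ δ := by nlinarith [le_abs_self s]
    have hsα' : -δ ≤ s * α := by nlinarith [neg_abs_le s]
    simp only [extendedPolytope, Set.mem_setOf_eq, hd, Prod.fst_add, Prod.snd_add,
      Prod.smul_fst, Prod.smul_snd, Pi.add_apply, Pi.smul_apply, smul_eq_mul,
      Set.mem_Icc]
    refine ⟨?_, ?_, ?_, ?_, ?_, ?_, ?_, ?_, ?_⟩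
    · intro g' t'
      by_cases hc : t' = t ∧ x.1 g' t = α
      · rw [if_pos hc, hc.1, hc.2]
        constructor <;> nlinarith
      · rw [if_neg hc, mul_zero, add_zero]
        exact c1 g' t'
    · intro g' t' h
      by_cases ht' : t' = t
      · rw [ht']
        by_cases hA : x.1 ⟨(g' : ℕ) + 1, h⟩ t = α <;> by_cases hB : x.1 g' t = α
        · rw [if_pos ⟨rfl, hA⟩, if_pos ⟨rfl, hB⟩, hA, hB]
        · rw [if_pos ⟨rfl, hA⟩, if_neg (fun hc => hB hc.2), hA]
          have hle : α ≤ x.1 g' t := hA ▸ c2 g' t h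
          have hlt : α < x.1 g' t := lt_of_le_of_ne hle (Ne.symm hB)
          have := hδle g' hB
          rw [abs_of_pos (sub_pos.2 hlt)] at this
          linarith
        · rw [if_neg (fun hc => hA hc.2), if_pos ⟨rfl, hB⟩, hB]
          have hle : x.1 ⟨(g' : ℕ) + 1, h⟩ t ≤ α := hB ▸ c2 g' t h
          have hlt : x.1 ⟨(g' : ℕ) + 1, h⟩ t < α := lt_of_le_of_ne hle hA
          have := hδle _ hA
          rw [abs_sub_comm, abs_of_pos (sub_pos.2 hlt)] at this
          linarith
        · rw [if_neg (fun hc => hA hc.2), if_neg (fun hc => hB hc.2)]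
          have := c2 g' t h
          linarith
      · rw [if_neg (fun hc => ht' hc.1), if_neg (fun hc => ht' hc.1)]
        have := c2 g' t' h
        linarith
    · intro g' t'
      by_cases hc : t' = t ∧ x.1 g' t = α
      · rw [if_pos hc, if_pos hc, if_pos hc, hc.1]
        obtain ⟨h31, h32, h33⟩ := c3 g' t
        refine ⟨by nlinarith, by nlinarith, by nlinarith⟩
      · rw [if_neg hc, if_neg hc, if_neg hc, mul_zero, add_zero, add_zero, add_zero]
        exact c3 g' t'
    · intro g' t'
      by_cases hc : t' = t ∧ x.1 g' t = α
      · rw [if_pos hc, if_pos hc, if_pos hc, hc.1, hc.2]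
        have h4 := c4 g' t
        rw [hc.2] at h4
        have hprod : 0 ≤ (1 + s) * ((Pmax - Pmin) * α - (x.2.1 g' t + x.2.2.1 g' t)) :=
          mul_nonneg (by linarith) (by linarith)
        nlinarith [hprod]
      · simp only [if_neg hc, mul_zero, add_zero]
        exact c4 g' t'
    · intro g' t'
      by_cases hc : t' = t ∧ x.1 g' t = α
      · rw [if_pos hc, if_pos hc, hc.1]
        have h5 := c5 g' t
        have h3 := (c3 g' t).2.2
        nlinarith
      · rw [if_neg hc, if_neg hc, mul_zero, add_zero, add_zero]
        exact c5 g' t'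
    · intro t'
      rw [c6 t', Finset.mul_sum, ← Finset.sum_add_distrib]
    · intro t'
      rw [c7 t', Finset.mul_sum, ← Finset.sum_add_distrib]
    · intro t'
      rw [c8 t', Finset.mul_sum, ← Finset.sum_add_distrib]
    · intro t'
      rw [c9 t', Finset.mul_sum, ← Finset.sum_add_distrib]
  have hy1 : x + ε • d ∈ extendedPolytope G T Pmax Pmin := by
    apply hmem <;> rw [abs_of_pos hε0]
    · exact hε1
    · exact hεδ
  have hy2 : x + (-ε) • d ∈ extendedPolytope G T Pmax Pmin := by
    apply hmem <;> rw [abs_neg, abs_of_pos hε0]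
    · exact hε1
    · exact hεδ
  have hseg : x ∈ openSegment ℝ (x + (-ε) • d) (x + ε • d) :=
    ⟨1 / 2, 1 / 2, by norm_num, by norm_num, by norm_num, by module⟩
  have hfin := hxe hy2 hy1 hseg
  have h2 := hfin
  have h3 := congrArg (fun z => z.1 g t) h2
  simp only [hd, Prod.fst_add, Prod.smul_fst, Pi.add_apply, Pi.smul_apply, smul_eq_mul] at h3
  simp at h3
  rcases h3 hαdef.symm with h3 | h3 <;> nlinarith



set_option maxHeartbeats 1000000
set_option maxRecDepth 8000
set_option synthInstance.maxHeartbeats 1000000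

/-- Every vertex (extreme point) of the extended polytope has 0–1 values in the `ũ`
coordinates, and the polytope is the convex hull of its mixed-integer feasible points. -/
theorem extendedPolytope_integral (G T : ℕ) (Pmax Pmin : ℝ)
    (hPmin : 0 ≤ Pmin) (hP : Pmin < Pmax) :
    (∀ x ∈ Set.extremePoints ℝ (extendedPolytope G T Pmax Pmin),
      ∀ g t, x.1 g t = 0 ∨ x.1 g t = 1) ∧
    extendedPolytope G T Pmax Pmin =
      convexHull ℝ {x ∈ extendedPolytope G T Pmax Pmin | ∀ g t, x.1 g t = 0 ∨ x.1 g t = 1} := by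
  refine ⟨ep_extreme_int G T Pmax Pmin, ?_⟩
  have hconv : Convex ℝ (extendedPolytope G T Pmax Pmin) := ep_convex G T Pmax Pmin
  have hcomp : IsCompact (extendedPolytope G T Pmax Pmin) := by
    rw [Metric.isCompact_iff_isClosed_bounded]
    exact ⟨ep_closed G T Pmax Pmin, ep_bounded G T Pmax Pmin hP⟩
  set M := {x ∈ extendedPolytope G T Pmax Pmin | ∀ g t, x.1 g t = 0 ∨ x.1 g t = 1} with hMdef
  have hMclosed : IsClosed M := by
    have hM2 : M = extendedPolytope G T Pmax Pmin ∩
        ⋂ (g : Fin G), ⋂ (t : Fin T), {x | x.1 g t = 0 ∨ x.1 g t = 1} := by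
      ext y
      simp only [hMdef, Set.mem_setOf_eq, Set.mem_inter_iff, Set.mem_iInter, Set.sep_setOf]
    rw [hM2]
    exact (ep_closed G T Pmax Pmin).inter (isClosed_iInter fun g => isClosed_iInter fun t =>
      ((isClosed_eq (by fun_prop) continuous_const).union
        (isClosed_eq (by fun_prop) continuous_const)))
  have hMcomp : IsCompact M := hcomp.of_isClosed_subset hMclosed (Set.sep_subset _ _)
  have hchM : IsCompact (convexHull ℝ M) := myIsCompact_convexHull hMcomp
  apply Set.Subset.antisymm
  · have hKM := closure_convexHull_extremePoints hcomp hconv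
    have hsub : Set.extremePoints ℝ (extendedPolytope G T Pmax Pmin) ⊆ M :=
      fun y hy => ⟨hy.1, ep_extreme_int G T Pmax Pmin y hy⟩
    calc extendedPolytope G T Pmax Pmin
        = closure (convexHull ℝ (Set.extremePoints ℝ (extendedPolytope G T Pmax Pmin))) :=
          hKM.symm
      _ ⊆ closure (convexHull ℝ M) := closure_mono (convexHull_mono hsub)
      _ = convexHull ℝ M := hchM.isClosed.closure_eq
  · exact convexHull_min (Set.sep_subset _ _) hconv
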